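/- Spinor decomposition into symmetric tensors: let t_{a1...an} be a rank-n tensor with indices a_i ∈ {1,2} and values in ℂ. Then t can be written as t_{a1...an} = Σ_P (ε_{I1}···ε_{Ik} t^P_{I0})_{a1...an}, where the sum runs over all partitions P = {I0, I1, ..., Ik} of the index positions {1,...,n} with |I1| = ··· = |Ik| = 2, ε_{Ij} denotes the antisymmetric symbol ε placed at the pair of positions Ij, and each t^P_{I0} is a completely symmetric tensor of rank |I0| placed at the positions I0. -/

import Mathlib

/-!  STATEMENT 16.
Spinor decomposition into symmetric tensors: every rank-`n` spinor tensor (indices in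
`{1,2}`, values in `ℂ`) is a sum over pair-partitions of the index positions of
`ε`-factors times completely symmetric tensors. -/

noncomputable section

open scoped BigOperators

namespace SpinorTensors

/-- A rank-`n` spinor tensor. -/
abbrev SpinTensor (n : ℕ) : Type := (Fin n → Fin 2) → ℂ

/-- The antisymmetric symbol `ε` with `ε_{12} = 1`. -/
def ε (a b : Fin 2) : ℂ := if a = 0 ∧ b = 1 then 1 else if a = 1 ∧ b = 0 then -1 else 0

/-- A splitting of the `n` index positions into `k` (ordered) pairs and `n - 2k` remaining
positions; this encodes a partition `{I₀, I₁, ..., I_k}` with `|I₁| = ⋯ = |I_k| = 2`. -/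
abbrev PairSplit (n k : ℕ) : Type := (Fin k ⊕ (Fin k ⊕ Fin (n - 2 * k))) ≃ Fin n

/-- `ε_{I₁}···ε_{I_k} s_{I₀}` : place `ε`-factors at the pairs of the splitting and the
tensor `s` at the remaining positions. -/
def place {n : ℕ} (k : ℕ) (e : PairSplit n k) (s : SpinTensor (n - 2 * k)) :
    SpinTensor n :=
  fun idx =>
    (∏ i : Fin k, ε (idx (e (Sum.inl i))) (idx (e (Sum.inr (Sum.inl i))))) *
      s fun j => idx (e (Sum.inr (Sum.inr j)))

/-- A spinor tensor is completely symmetric. -/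
def IsSymmetric {n : ℕ} (t : SpinTensor n) : Prop :=
  ∀ (g : Equiv.Perm (Fin n)) (idx : Fin n → Fin 2), t (idx ∘ g) = t idx

end SpinorTensors

/-! ### Auxiliary material for the proof -/

namespace SpinorTensors

open scoped Classical

lemma eps_diag (a : Fin 2) : ε a a = 0 := by fin_cases a <;> rfl

lemma isSymmetric_zero {n : ℕ} : IsSymmetric (0 : SpinTensor n) := by
  intro g idx; rfl

lemma isSymmetric_ite {n : ℕ} (p : Prop) [Decidable p] {s u : SpinTensor n}
    (hs : IsSymmetric s) (hu : IsSymmetric u) : IsSymmetric (if p then s else u) := by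
  split <;> assumption

lemma isSymmetric_sum {n : ℕ} {α : Type*} (s : Finset α) (f : α → SpinTensor n)
    (h : ∀ a ∈ s, IsSymmetric (f a)) : IsSymmetric (∑ a ∈ s, f a) := by
  intro g idx
  simp only [Finset.sum_apply]
  exact Finset.sum_congr rfl fun a ha => h a ha g idx

/-- symmetrization -/
def Sym {n : ℕ} (t : SpinTensor n) : SpinTensor n :=
  fun idx => ((n.factorial : ℂ))⁻¹ * ∑ σ : Equiv.Perm (Fin n), t (idx ∘ σ)

lemma isSymmetric_Sym {n : ℕ} (t : SpinTensor n) : IsSymmetric (Sym t) := by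
  intro g idx
  unfold Sym
  congr 1
  rw [← Equiv.sum_comp (Equiv.mulLeft g) (fun σ : Equiv.Perm (Fin n) => t (idx ∘ σ))]
  refine Finset.sum_congr rfl fun σ _ => ?_
  congr 1

lemma exists_pairSplit_of_ne {n : ℕ} {i j : Fin n} (hij : i ≠ j) :
    ∃ e : PairSplit n 1, e (Sum.inl 0) = i ∧ e (Sum.inr (Sum.inl 0)) = j := by
  have hn : 2 ≤ n := by
    by_contra h
    push_neg at h
    interval_cases n
    · exact i.elim0
    · exact hij (Subsingleton.elim i j)
  have hcard : Fintype.card (Fin 1 ⊕ (Fin 1 ⊕ Fin (n - 2 * 1))) = Fintype.card (Fin n) := by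
    simp; omega
  obtain e₁ := Fintype.equivOfCardEq hcard
  have hab : e₁ (Sum.inl 0) ≠ e₁ (Sum.inr (Sum.inl 0)) := by
    intro h
    exact (by simp : (Sum.inl 0 : Fin 1 ⊕ (Fin 1 ⊕ Fin (n - 2 * 1))) ≠ Sum.inr (Sum.inl 0))
      (e₁.injective h)
  set a := e₁ (Sum.inl 0)
  set b := e₁ (Sum.inr (Sum.inl 0))
  have hb'i : Equiv.swap a i b ≠ i := by
    intro h
    exact hab (((Equiv.swap a i).injective (h.trans (Equiv.swap_apply_left a i).symm)).symm)
  refine ⟨e₁.trans ((Equiv.swap a i).trans (Equiv.swap (Equiv.swap a i b) j)), ?_, ?_⟩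
  · show Equiv.swap (Equiv.swap a i b) j (Equiv.swap a i a) = i
    rw [Equiv.swap_apply_left]
    exact Equiv.swap_apply_of_ne_of_ne (Ne.symm hb'i) hij
  · show Equiv.swap (Equiv.swap a i b) j (Equiv.swap a i b) = j
    exact Equiv.swap_apply_left _ j

lemma antisym_decomp {n : ℕ} {i j : Fin n} (hij : i ≠ j) (v : SpinTensor n)
    (hv : ∀ idx : Fin n → Fin 2, v (idx ∘ Equiv.swap i j) = -v idx) :
    ∃ (e : PairSplit n 1) (u : SpinTensor (n - 2 * 1)), ∀ idx, v idx = place 1 e u idx := by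
  obtain ⟨e, hei, hej⟩ := exists_pairSplit_of_ne hij
  set u : SpinTensor (n - 2 * 1) := fun f => v (fun p => Sum.elim (fun _ => (0 : Fin 2))
      (Sum.elim (fun _ => (1 : Fin 2)) f) (e.symm p)) with hu
  refine ⟨e, u, fun idx => ?_⟩
  have hsymm_i : e.symm i = Sum.inl 0 := by rw [← hei, Equiv.symm_apply_apply]
  have hsymm_j : e.symm j = Sum.inr (Sum.inl 0) := by rw [← hej, Equiv.symm_apply_apply]
  set idxf : Fin n → Fin 2 := fun p => Sum.elim (fun _ => (0 : Fin 2))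
      (Sum.elim (fun _ => (1 : Fin 2)) (fun m => idx (e (Sum.inr (Sum.inr m))))) (e.symm p)
    with hidxf
  have hplace : place 1 e u idx = ε (idx i) (idx j) * v idxf := by
    simp only [place, Fin.prod_univ_one, hei, hej, hu]
    rfl
  rw [hplace]
  have key : ∀ p, idxf p = if p = i then 0 else if p = j then 1 else idx p := by
    intro p
    by_cases hpi : p = i
    · simp [hidxf, hpi, hsymm_i]
    · by_cases hpj : p = j
      · simp [hidxf, hpj, hpi, hsymm_j, Ne.symm hij]
      · simp only [hidxf, hpi, hpj, if_false]
        rcases hq : e.symm p with q | q | m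
        · exact absurd (by rw [← e.apply_symm_apply p, hq, Subsingleton.elim q 0, hei]) hpi
        · exact absurd (by rw [← e.apply_symm_apply p, hq, Subsingleton.elim q 0, hej]) hpj
        · simp only [Sum.elim_inr]
          rw [← e.apply_symm_apply p, hq]
  have hcomp : ∀ p, (idx ∘ Equiv.swap i j) p =
      if p = i then idx j else if p = j then idx i else idx p := by
    intro p
    by_cases hpi : p = i
    · simp [hpi, Equiv.swap_apply_left]
    · by_cases hpj : p = j
      · simp [hpj, hpi, Equiv.swap_apply_right, Ne.symm hij]
      · simp [Function.comp, Equiv.swap_apply_of_ne_of_ne hpi hpj, hpi, hpj]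
  have h2 : ∀ a : Fin 2, a = 0 ∨ a = 1 := by decide
  rcases h2 (idx i) with hi0 | hi0 <;> rcases h2 (idx j) with hj0 | hj0
  · -- (0,0): v idx = 0
    have hfix : idx ∘ Equiv.swap i j = idx := by
      funext p; rw [hcomp p]; split_ifs with h h'
      · rw [h, hi0, hj0]
      · rw [h', hi0, hj0]
      · rfl
    have hz : v idx = 0 := by
      have := hv idx
      rw [hfix] at this
      linear_combination this / 2
    rw [hz, hi0, hj0, eps_diag, zero_mul]
  · -- (0,1): idxf = idx
    have hfixf : idxf = idx := by
      funext p; rw [key p]; split_ifs with h h'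
      · rw [h, hi0]
      · rw [h', hj0]
      · rfl
    rw [hfixf, hi0, hj0, show ε 0 1 = 1 from rfl, one_mul]
  · -- (1,0)
    have hcf : idx ∘ Equiv.swap i j = idxf := by
      funext p; rw [hcomp p, key p]; split_ifs with h h'
      · rw [hj0]
      · rw [hi0]
      · rfl
    have hv' := hv idx
    rw [hcf] at hv'
    rw [hi0, hj0, show ε 1 0 = -1 from rfl, hv']
    ring
  · -- (1,1)
    have hfix : idx ∘ Equiv.swap i j = idx := by
      funext p; rw [hcomp p]; split_ifs with h h'
      · rw [h, hi0, hj0]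
      · rw [h', hi0, hj0]
      · rfl
    have hz : v idx = 0 := by
      have := hv idx
      rw [hfix] at this
      linear_combination this / 2
    rw [hz, hi0, hj0, eps_diag, zero_mul]

def InPairSpan {n : ℕ} (v : SpinTensor n) : Prop :=
  ∃ u : PairSplit n 1 → SpinTensor (n - 2 * 1),
    ∀ idx, v idx = ∑ e : PairSplit n 1, place 1 e (u e) idx

lemma inPairSpan_congr {n : ℕ} {v w : SpinTensor n} (h : ∀ idx, v idx = w idx)
    (hw : InPairSpan w) : InPairSpan v := by
  obtain ⟨u, hu⟩ := hw
  exact ⟨u, fun idx => (h idx).trans (hu idx)⟩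

lemma inPairSpan_zero {n : ℕ} : InPairSpan (fun _ => (0 : ℂ) : SpinTensor n) := by
  refine ⟨fun _ => 0, fun idx => ?_⟩
  simp [place]

lemma inPairSpan_add {n : ℕ} {v w : SpinTensor n} (hv : InPairSpan v) (hw : InPairSpan w) :
    InPairSpan (fun idx => v idx + w idx) := by
  obtain ⟨u, hu⟩ := hv
  obtain ⟨u', hu'⟩ := hw
  refine ⟨fun e => u e + u' e, fun idx => ?_⟩
  show v idx + w idx = _
  rw [hu idx, hu' idx, ← Finset.sum_add_distrib]
  refine Finset.sum_congr rfl fun e _ => ?_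
  simp [place, mul_add]

lemma inPairSpan_smul {n : ℕ} (c : ℂ) {v : SpinTensor n} (hv : InPairSpan v) :
    InPairSpan (fun idx => c * v idx) := by
  obtain ⟨u, hu⟩ := hv
  refine ⟨fun e => fun f => c * u e f, fun idx => ?_⟩
  show c * v idx = _
  rw [hu idx, Finset.mul_sum]
  refine Finset.sum_congr rfl fun e _ => ?_
  simp only [place]
  ring

lemma inPairSpan_single {n : ℕ} (e : PairSplit n 1) (u₀ : SpinTensor (n - 2 * 1)) :
    InPairSpan (place 1 e u₀) := by
  refine ⟨fun e' => if e' = e then u₀ else 0, fun idx => ?_⟩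
  rw [Finset.sum_eq_single e]
  · simp
  · intro e' _ hne
    simp [place, hne]
  · simp

lemma inPairSpan_sum {n : ℕ} {α : Type*} (s : Finset α) (f : α → SpinTensor n)
    (h : ∀ a ∈ s, InPairSpan (f a)) :
    InPairSpan (fun idx => ∑ a ∈ s, f a idx) := by
  classical
  induction s using Finset.induction_on with
  | empty => exact inPairSpan_congr (fun idx => by simp) inPairSpan_zero
  | insert _ _ hnotmem ih =>
    rename_i a s
    refine inPairSpan_congr (fun idx => Finset.sum_insert hnotmem)
      (inPairSpan_add (h a (Finset.mem_insert_self a s))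
        (ih fun b hb => h b (Finset.mem_insert_of_mem hb)))

lemma inPairSpan_swap_diff {n : ℕ} {i j : Fin n} (hij : i ≠ j) (w : SpinTensor n) :
    InPairSpan (fun idx => w idx - w (idx ∘ Equiv.swap i j)) := by
  have hanti : ∀ idx : Fin n → Fin 2,
      (fun idx => w idx - w (idx ∘ Equiv.swap i j)) (idx ∘ Equiv.swap i j)
        = -(fun idx => w idx - w (idx ∘ Equiv.swap i j)) idx := by
    intro idx
    have : (idx ∘ Equiv.swap i j) ∘ Equiv.swap i j = idx := by
      funext p; simp [Function.comp, Equiv.swap_apply_self]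
    simp only [this]
    ring
  obtain ⟨e, u, hu⟩ := antisym_decomp hij
    (fun idx => w idx - w (idx ∘ Equiv.swap i j)) hanti
  exact inPairSpan_congr hu (inPairSpan_single e u)

lemma inPairSpan_perm_diff {n : ℕ} (t : SpinTensor n) (σ : Equiv.Perm (Fin n)) :
    InPairSpan (fun idx => t idx - t (idx ∘ σ)) := by
  refine Equiv.Perm.swap_induction_on σ ?_ ?_
  · refine inPairSpan_congr (fun idx => ?_) inPairSpan_zero
    simp
  · intro σ x y hxy ih
    refine inPairSpan_congr (fun idx => ?_)
      (inPairSpan_add ih (inPairSpan_swap_diff hxy (fun idx => t (idx ∘ σ))))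
    have h1 : idx ∘ ⇑(Equiv.swap x y * σ) = (idx ∘ Equiv.swap x y) ∘ σ := by
      funext p; simp [Function.comp, Equiv.Perm.mul_apply]
    show t idx - t (idx ∘ ⇑(Equiv.swap x y * σ)) = _
    rw [h1]
    ring

lemma lemmaA {n : ℕ} (t : SpinTensor n) :
    InPairSpan (fun idx => t idx - Sym t idx) := by
  have hcard : (Fintype.card (Equiv.Perm (Fin n)) : ℂ) = (n.factorial : ℂ) := by
    rw [Fintype.card_perm, Fintype.card_fin]
  have hfac : (n.factorial : ℂ) ≠ 0 := by
    exact_mod_cast Nat.cast_ne_zero.mpr (Nat.factorial_ne_zero n)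
  refine inPairSpan_congr (fun idx => ?_)
    (inPairSpan_smul ((n.factorial : ℂ))⁻¹
      (inPairSpan_sum Finset.univ (fun σ : Equiv.Perm (Fin n) => fun idx => t idx - t (idx ∘ σ))
        (fun σ _ => inPairSpan_perm_diff t σ)))
  show t idx - Sym t idx = (n.factorial : ℂ)⁻¹ * ∑ σ : Equiv.Perm (Fin n), (t idx - t (idx ∘ σ))
  rw [Finset.sum_sub_distrib, Finset.sum_const, Finset.card_univ]
  unfold Sym
  field_simp
  rw [nsmul_eq_mul, hcard]
  ring

/-- `Fin (k+1) ≃ Fin k ⊕ Fin 1` sending `castSucc` to `inl` and `last` to `inr 0`. -/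
def splitLast (k : ℕ) : Fin (k + 1) ≃ (Fin k ⊕ Fin 1) where
  toFun := Fin.lastCases (Sum.inr 0) Sum.inl
  invFun := Sum.elim Fin.castSucc (fun _ => Fin.last k)
  left_inv := by
    intro i
    induction i using Fin.lastCases with
    | last => simp
    | cast i => simp
  right_inv := by
    rintro (i | o)
    · simp
    · simp [Subsingleton.elim o 0]

@[simp] lemma splitLast_castSucc {k : ℕ} (i : Fin k) :
    splitLast k (Fin.castSucc i) = Sum.inl i := by simp [splitLast]
@[simp] lemma splitLast_last {k : ℕ} : splitLast k (Fin.last k) = Sum.inr 0 := by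
  simp [splitLast]

/-- pure sum-shuffle -/
def shuffle (K O M : Type*) : ((K ⊕ O) ⊕ ((K ⊕ O) ⊕ M)) ≃ (O ⊕ (O ⊕ (K ⊕ (K ⊕ M)))) where
  toFun := fun x => match x with
    | .inl (.inl k) => .inr (.inr (.inl k))
    | .inl (.inr o) => .inl o
    | .inr (.inl (.inl k)) => .inr (.inr (.inr (.inl k)))
    | .inr (.inl (.inr o)) => .inr (.inl o)
    | .inr (.inr m) => .inr (.inr (.inr (.inr m)))
  invFun := fun x => match x with
    | .inl o => .inl (.inr o)
    | .inr (.inl o) => .inr (.inl (.inr o))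
    | .inr (.inr (.inl k)) => .inl (.inl k)
    | .inr (.inr (.inr (.inl k))) => .inr (.inl (.inl k))
    | .inr (.inr (.inr (.inr m))) => .inr (.inr m)
  left_inv := by rintro ((k | o) | ((k | o) | m)) <;> rfl
  right_inv := by rintro (o | (o | (k | (k | m)))) <;> rfl

lemma sub_arith (n k' : ℕ) : n - 2 - 2 * k' = n - 2 * (k' + 1) := by omega

/-- glue a distinguished pair onto a smaller pair-splitting -/
def glue {n k' : ℕ} (e : PairSplit n 1) (e' : PairSplit (n - 2) k') : PairSplit n (k' + 1) :=
  ((Equiv.sumCongr (splitLast k') (Equiv.sumCongr (splitLast k')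
      (finCongr (sub_arith n k').symm))).trans
    ((shuffle (Fin k') (Fin 1) (Fin (n - 2 - 2 * k'))).trans
      ((Equiv.sumCongr (Equiv.refl (Fin 1)) (Equiv.sumCongr (Equiv.refl (Fin 1)) e')).trans e)))

@[simp] lemma glue_inl_castSucc {n k' : ℕ} (e : PairSplit n 1) (e' : PairSplit (n - 2) k')
    (i : Fin k') :
    glue e e' (Sum.inl (Fin.castSucc i)) = e (Sum.inr (Sum.inr (e' (Sum.inl i)))) := by
  simp [glue, shuffle]
@[simp] lemma glue_inl_last {n k' : ℕ} (e : PairSplit n 1) (e' : PairSplit (n - 2) k') :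
    glue e e' (Sum.inl (Fin.last k')) = e (Sum.inl 0) := by
  simp [glue, shuffle]
@[simp] lemma glue_inr_inl_castSucc {n k' : ℕ} (e : PairSplit n 1) (e' : PairSplit (n - 2) k')
    (i : Fin k') : glue e e' (Sum.inr (Sum.inl (Fin.castSucc i)))
      = e (Sum.inr (Sum.inr (e' (Sum.inr (Sum.inl i))))) := by
  simp [glue, shuffle]
@[simp] lemma glue_inr_inl_last {n k' : ℕ} (e : PairSplit n 1) (e' : PairSplit (n - 2) k') :
    glue e e' (Sum.inr (Sum.inl (Fin.last k'))) = e (Sum.inr (Sum.inl 0)) := by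
  simp [glue, shuffle]
@[simp] lemma glue_inr_inr {n k' : ℕ} (e : PairSplit n 1) (e' : PairSplit (n - 2) k')
    (j : Fin (n - 2 * (k' + 1))) : glue e e' (Sum.inr (Sum.inr j))
      = e (Sum.inr (Sum.inr (e' (Sum.inr (Sum.inr (Fin.cast (sub_arith n k').symm j)))))) := by
  simp [glue, shuffle, finCongr]

/-- transport a tensor along the arithmetic identity -/
def transport {n k' : ℕ} (s : SpinTensor (n - 2 - 2 * k')) : SpinTensor (n - 2 * (k' + 1)) :=
  fun f => s (fun j => f (Fin.cast (sub_arith n k') j))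

lemma isSymmetric_transport {n k' : ℕ} {s : SpinTensor (n - 2 - 2 * k')}
    (hs : IsSymmetric s) : IsSymmetric (transport s) := by
  intro g idx
  unfold transport
  have := hs ((finCongr (sub_arith n k')).trans (g.trans (finCongr (sub_arith n k').symm)))
    (fun j => idx (Fin.cast (sub_arith n k') j))
  convert this using 2
  funext j
  simp [finCongr]

lemma place_glue {n k' : ℕ} (e : PairSplit n 1) (e' : PairSplit (n - 2) k')
    (s : SpinTensor (n - 2 - 2 * k')) (idx : Fin n → Fin 2) :
    place (k' + 1) (glue e e') (transport s) idx
      = ε (idx (e (Sum.inl 0))) (idx (e (Sum.inr (Sum.inl 0)))) *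
        place k' e' s (fun j => idx (e (Sum.inr (Sum.inr j)))) := by
  unfold place transport
  rw [Fin.prod_univ_castSucc]
  simp only [glue_inl_castSucc, glue_inl_last, glue_inr_inl_castSucc, glue_inr_inl_last,
    glue_inr_inr]
  have hc : ∀ j : Fin (n - 2 - 2 * k'),
      Fin.cast (sub_arith n k').symm (Fin.cast (sub_arith n k') j) = j := by
    intro j; ext; simp
  simp only [hc]
  ring

/-- the trivial empty splitting -/
def e0 (n : ℕ) : PairSplit n 0 where
  toFun := fun x => match x with
    | .inl i => i.elim0
    | .inr (.inl i) => i.elim0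
    | .inr (.inr j) => j
  invFun := fun j => .inr (.inr j)
  left_inv := by
    rintro (i | i | j)
    · exact i.elim0
    · exact i.elim0
    · rfl
  right_inv := fun j => rfl

lemma place_e0 {n : ℕ} (s : SpinTensor (n - 2 * 0)) (idx : Fin n → Fin 2) :
    place 0 (e0 n) s idx = s idx := by
  unfold place
  simp [e0]

lemma place_sum {n k : ℕ} (e : PairSplit n k) {α : Type*} (s : Finset α)
    (f : α → SpinTensor (n - 2 * k)) (idx : Fin n → Fin 2) :
    place k e (∑ a ∈ s, f a) idx = ∑ a ∈ s, place k e (f a) idx := by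
  unfold place
  rw [Finset.sum_apply, Finset.mul_sum]

lemma place_ite {n k : ℕ} (e : PairSplit n k) (p : Prop) [Decidable p]
    (s : SpinTensor (n - 2 * k)) (idx : Fin n → Fin 2) :
    place k e (if p then s else 0) idx = if p then place k e s idx else 0 := by
  split
  · rfl
  · simp [place]

lemma two_le_of_ps1 {n : ℕ} (e : PairSplit n 1) : 2 ≤ n := by
  by_contra h
  push_neg at h
  have hne : e (Sum.inl 0) ≠ e (Sum.inr (Sum.inl 0)) := by
    intro hh
    exact (by simp : (Sum.inl 0 : Fin 1 ⊕ (Fin 1 ⊕ Fin (n - 2 * 1))) ≠ Sum.inr (Sum.inl 0))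
      (e.injective hh)
  interval_cases n
  · exact (e (Sum.inl 0)).elim0
  · exact hne (Subsingleton.elim _ _)

/-- Build the full family of symmetric tensors from the symmetrization and the recursively
obtained families. -/
def buildT {n : ℕ} (s0 : SpinTensor (n - 2 * 0))
    (T' : PairSplit n 1 → (k : ℕ) → PairSplit (n - 2) k → SpinTensor (n - 2 - 2 * k)) :
    (k : ℕ) → PairSplit n k → SpinTensor (n - 2 * k)
  | 0 => fun E => if E = e0 n then s0 else 0
  | (k' + 1) => fun E => ∑ e : PairSplit n 1, ∑ e' : PairSplit (n - 2) k',
      if glue e e' = E then transport (T' e k' e') else 0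

end SpinorTensors

open SpinorTensors in
theorem spinor_decomposition {n : ℕ} (t : SpinTensor n) :
    ∃ T : (k : ℕ) → (e : PairSplit n k) → SpinTensor (n - 2 * k),
      (∀ k (e : PairSplit n k), IsSymmetric (T k e)) ∧
      ∀ idx : Fin n → Fin 2,
        t idx = ∑ k ∈ Finset.range (n / 2 + 1), ∑ e : PairSplit n k,
          place k e (T k e) idx := by
  classical
  induction n using Nat.strong_induction_on with
  | _ n IH =>
  obtain ⟨u, hu⟩ := lemmaA t
  have hT' : ∀ e : PairSplit n 1,
      ∃ T' : (k : ℕ) → PairSplit (n - 2) k → SpinTensor (n - 2 - 2 * k),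
        (∀ k (e' : PairSplit (n - 2) k), IsSymmetric (T' k e')) ∧
        ∀ idx' : Fin (n - 2) → Fin 2,
          u e idx' = ∑ k ∈ Finset.range ((n - 2) / 2 + 1), ∑ e' : PairSplit (n - 2) k,
            place k e' (T' k e') idx' := by
    intro e
    have hn : 2 ≤ n := two_le_of_ps1 e
    exact IH (n - 2) (by omega) (u e)
  choose T' hT'sym hT'rep using hT'
  refine ⟨buildT (Sym t) T', ?_, ?_⟩
  · intro k E
    cases k with
    | zero => exact isSymmetric_ite _ (isSymmetric_Sym t) isSymmetric_zero
    | succ k' =>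
      exact isSymmetric_sum _ _ fun e _ => isSymmetric_sum _ _ fun e' _ =>
        isSymmetric_ite _ (isSymmetric_transport (hT'sym e k' e')) isSymmetric_zero
  · intro idx
    have hu' : t idx - Sym t idx = ∑ e : PairSplit n 1, place 1 e (u e) idx := hu idx
    have h0 : (∑ E : PairSplit n 0, place 0 E (buildT (Sym t) T' 0 E) idx) = Sym t idx := by
      rw [Finset.sum_eq_single (e0 n)]
      · show place 0 (e0 n) (if (e0 n : PairSplit n 0) = e0 n then Sym t else 0) idx = _
        rw [if_pos rfl, place_e0]
      · intro E _ hne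
        show place 0 E (if E = e0 n then Sym t else 0) idx = 0
        rw [if_neg hne]
        simp [place]
      · intro h; exact absurd (Finset.mem_univ _) h
    have h1 : ∀ k' ∈ Finset.range (n / 2),
        (∑ E : PairSplit n (k' + 1), place (k' + 1) E (buildT (Sym t) T' (k' + 1) E) idx)
          = ∑ e : PairSplit n 1, ∑ e' : PairSplit (n - 2) k',
              ε (idx (e (Sum.inl 0))) (idx (e (Sum.inr (Sum.inl 0)))) *
                place k' e' (T' e k' e') (fun j => idx (e (Sum.inr (Sum.inr j)))) := by
      intro k' _
      calc (∑ E : PairSplit n (k' + 1), place (k' + 1) E (buildT (Sym t) T' (k' + 1) E) idx)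
          = ∑ E : PairSplit n (k' + 1), ∑ e : PairSplit n 1, ∑ e' : PairSplit (n - 2) k',
              if glue e e' = E then place (k' + 1) E (transport (T' e k' e')) idx else 0 := by
            refine Finset.sum_congr rfl fun E _ => ?_
            rw [show buildT (Sym t) T' (k' + 1) E = ∑ e : PairSplit n 1,
              ∑ e' : PairSplit (n - 2) k',
                if glue e e' = E then transport (T' e k' e') else 0 from rfl]
            rw [place_sum]
            refine Finset.sum_congr rfl fun e _ => ?_
            rw [place_sum]
            exact Finset.sum_congr rfl fun e' _ => place_ite _ _ _ _
        _ = ∑ e : PairSplit n 1, ∑ e' : PairSplit (n - 2) k', ∑ E : PairSplit n (k' + 1),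
              if glue e e' = E then place (k' + 1) E (transport (T' e k' e')) idx else 0 := by
            rw [Finset.sum_comm]
            exact Finset.sum_congr rfl fun e _ => Finset.sum_comm
        _ = ∑ e : PairSplit n 1, ∑ e' : PairSplit (n - 2) k',
              place (k' + 1) (glue e e') (transport (T' e k' e')) idx := by
            refine Finset.sum_congr rfl fun e _ => Finset.sum_congr rfl fun e' _ => ?_
            rw [Finset.sum_ite_eq]
            simp
        _ = ∑ e : PairSplit n 1, ∑ e' : PairSplit (n - 2) k',
              ε (idx (e (Sum.inl 0))) (idx (e (Sum.inr (Sum.inl 0)))) *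
                place k' e' (T' e k' e') (fun j => idx (e (Sum.inr (Sum.inr j)))) := by
            exact Finset.sum_congr rfl fun e _ => Finset.sum_congr rfl fun e' _ =>
              place_glue e e' (T' e k' e') idx
    have key2 : (∑ k' ∈ Finset.range (n / 2), ∑ e : PairSplit n 1, ∑ e' : PairSplit (n - 2) k',
        ε (idx (e (Sum.inl 0))) (idx (e (Sum.inr (Sum.inl 0)))) *
          place k' e' (T' e k' e') (fun j => idx (e (Sum.inr (Sum.inr j)))))
        = ∑ e : PairSplit n 1, place 1 e (u e) idx := by
      rw [Finset.sum_comm]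
      refine Finset.sum_congr rfl fun e _ => ?_
      have hn : 2 ≤ n := two_le_of_ps1 e
      have hrange : (n - 2) / 2 + 1 = n / 2 := by omega
      calc (∑ k' ∈ Finset.range (n / 2), ∑ e' : PairSplit (n - 2) k',
            ε (idx (e (Sum.inl 0))) (idx (e (Sum.inr (Sum.inl 0)))) *
              place k' e' (T' e k' e') (fun j => idx (e (Sum.inr (Sum.inr j)))))
          = ε (idx (e (Sum.inl 0))) (idx (e (Sum.inr (Sum.inl 0)))) *
              ∑ k' ∈ Finset.range (n / 2), ∑ e' : PairSplit (n - 2) k',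
                place k' e' (T' e k' e') (fun j => idx (e (Sum.inr (Sum.inr j)))) := by
            simp only [← Finset.mul_sum]
        _ = ε (idx (e (Sum.inl 0))) (idx (e (Sum.inr (Sum.inl 0)))) *
              u e (fun j => idx (e (Sum.inr (Sum.inr j)))) := by
            rw [← hrange, ← hT'rep e (fun j => idx (e (Sum.inr (Sum.inr j))))]
        _ = place 1 e (u e) idx := by
            simp [place, Fin.prod_univ_one]
    calc t idx = (∑ e : PairSplit n 1, place 1 e (u e) idx) + Sym t idx := by
          linear_combination hu'
      _ = (∑ k' ∈ Finset.range (n / 2), ∑ E : PairSplit n (k' + 1),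
            place (k' + 1) E (buildT (Sym t) T' (k' + 1) E) idx)
          + ∑ E : PairSplit n 0, place 0 E (buildT (Sym t) T' 0 E) idx := by
          rw [h0, Finset.sum_congr rfl h1, key2]
      _ = ∑ k ∈ Finset.range (n / 2 + 1), ∑ E : PairSplit n k,
            place k E (buildT (Sym t) T' k E) idx :=
          (Finset.sum_range_succ' (fun k => ∑ E : PairSplit n k,
            place k E (buildT (Sym t) T' k E) idx) (n / 2)).symm
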